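/- arXiv:1411.2923 — 3 statements merged into one kernel-verified Lean document; each statement's English description precedes it below -/
import Mathlib

section
/- Decomposition of directional derivatives under an orthogonal splitting: let F : ℝ^n → ℝ, write ℝ^n = V ⊕ V^⊥ for a coordinate subspace V, and suppose F(x + αp) = G(x_V + α p_V) + H(α p_⊥) + o(α) near a point x ∈ V, where G is differentiable at x_V and H is positively homogeneous of degree 1 with H(0)=0. Then F'(x; p) = F'(x; p_V) + F'(x; p_⊥), where p = p_V + p_⊥ is the orthogonal decomposition of p. -/
open Filter Topology

/-- Projection onto the coordinate subspace indexed by `S`. -/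
def projIn {n : ℕ} (S : Finset (Fin n)) (p : Fin n → ℝ) : Fin n → ℝ :=
  fun i => if i ∈ S then p i else 0

/-- Projection onto the orthogonal complement of the coordinate subspace `S`. -/
def projOut {n : ℕ} (S : Finset (Fin n)) (p : Fin n → ℝ) : Fin n → ℝ :=
  fun i => if i ∈ S then 0 else p i

lemma projIn_projIn {n : ℕ} (S : Finset (Fin n)) (p : Fin n → ℝ) :
    projIn S (projIn S p) = projIn S p := by
  funext i; simp only [projIn]; split <;> simp

lemma projOut_projIn {n : ℕ} (S : Finset (Fin n)) (p : Fin n → ℝ) :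
    projOut S (projIn S p) = 0 := by
  funext i; simp only [projIn, projOut]; split <;> simp

lemma projIn_projOut {n : ℕ} (S : Finset (Fin n)) (p : Fin n → ℝ) :
    projIn S (projOut S p) = 0 := by
  funext i; simp only [projIn, projOut]; split <;> simp

lemma projOut_projOut {n : ℕ} (S : Finset (Fin n)) (p : Fin n → ℝ) :
    projOut S (projOut S p) = projOut S p := by
  funext i; simp only [projOut]; split <;> simp

lemma projIn_zero {n : ℕ} (S : Finset (Fin n)) : projIn S (0 : Fin n → ℝ) = 0 := by
  funext i; simp [projIn]

lemma projOut_zero {n : ℕ} (S : Finset (Fin n)) : projOut S (0 : Fin n → ℝ) = 0 := by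
  funext i; simp [projOut]

/-- Decomposition of one-sided directional derivatives under an orthogonal
coordinate splitting: if near `x ∈ V`,
`F(x+αq) = G(x_V + αq_V) + H(αq_⊥) + o(α)` with `G` differentiable and `H`
positively homogeneous with `H(0)=0`, then `F'(x;p) = F'(x;p_V) + F'(x;p_⊥)`. -/
theorem dirDeriv_decomposition (n : ℕ) (S : Finset (Fin n))
    (F G H : (Fin n → ℝ) → ℝ) (x p : Fin n → ℝ)
    (hxS : ∀ i ∉ S, x i = 0)
    (hG : DifferentiableAt ℝ G (projIn S x))
    (hH0 : H 0 = 0)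
    (hHhom : ∀ c : ℝ, 0 < c → ∀ q : Fin n → ℝ, H (c • q) = c * H q)
    (hexp : ∀ q : Fin n → ℝ, ∃ r : ℝ → ℝ,
      Tendsto (fun α : ℝ => r α / α) (𝓝[>] 0) (𝓝 0) ∧
      ∀ α ∈ Set.Ioc (0:ℝ) 1,
        F (x + α • q) = G (projIn S x + α • projIn S q) + H (α • projOut S q) + r α)
    (LV Lperp : ℝ)
    (hLV : Tendsto (fun α : ℝ => (F (x + α • projIn S p) - F x) / α)
      (𝓝[>] 0) (𝓝 LV))
    (hLperp : Tendsto (fun α : ℝ => (F (x + α • projOut S p) - F x) / α)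
      (𝓝[>] 0) (𝓝 Lperp)) :
    Tendsto (fun α : ℝ => (F (x + α • p) - F x) / α) (𝓝[>] 0) (𝓝 (LV + Lperp)) := by
  obtain ⟨rp, hrp, hrp'⟩ := hexp p
  obtain ⟨r1, hr1, hr1'⟩ := hexp (projIn S p)
  obtain ⟨r2, hr2, hr2'⟩ := hexp (projOut S p)
  obtain ⟨r0, hr0, hr0'⟩ := hexp 0
  have hmem : Set.Ioc (0:ℝ) 1 ∈ 𝓝[>] (0:ℝ) := Ioc_mem_nhdsGT_of_mem (by norm_num)
  -- r0 is constant, equal to F x - G (projIn S x)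
  have hr0const : ∀ α ∈ Set.Ioc (0:ℝ) 1, r0 α = F x - G (projIn S x) := by
    intro α hα
    have := hr0' α hα
    simp only [smul_zero, add_zero, projIn_zero, projOut_zero, hH0] at this
    linarith
  have hFx : F x = G (projIn S x) := by
    have h1 : Tendsto (fun α : ℝ => α * (r0 α / α)) (𝓝[>] (0:ℝ)) (𝓝 0) := by
      have := (tendsto_id.mono_left nhdsWithin_le_nhds).mul hr0
      simpa using this
    have h2 : (fun α : ℝ => α * (r0 α / α)) =ᶠ[𝓝[>] (0:ℝ)]
        fun _ => F x - G (projIn S x) := by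
      filter_upwards [hmem, self_mem_nhdsWithin] with α hα hα'
      rw [mul_div_cancel₀ _ (ne_of_gt hα'), hr0const α hα]
    have h3 := h1.congr' h2
    have := tendsto_nhds_unique h3 tendsto_const_nhds
    linarith
  -- main eventual equality
  have heq : (fun α : ℝ => (F (x + α • p) - F x) / α) =ᶠ[𝓝[>] (0:ℝ)]
      fun α => (F (x + α • projIn S p) - F x) / α
        + (F (x + α • projOut S p) - F x) / α
        - r1 α / α - r2 α / α + rp α / α := by
    filter_upwards [hmem] with α hα
    have e1 := hrp' α hα
    have e2 := hr1' α hα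
    have e3 := hr2' α hα
    rw [projIn_projIn, projOut_projIn, smul_zero, hH0, add_zero] at e2
    rw [projIn_projOut, projOut_projOut, smul_zero, add_zero] at e3
    rw [e1, e2, e3, ← hFx]
    ring
  have := ((((hLV.add hLperp).sub hr1).sub hr2).add hrp).congr' heq.symm
  simpa using this
end

section
/- The one-sided directional derivative of the Fréchet-type function F(x) = Σ_{i=1}^n Σ_{l=1}^{k_i} (‖x|_{A^i_l}‖ + b^i_l)² + Σ_{i=1}^n Σ_{e∈C^i} (x_e − c^i_e)², at a point x in the nonnegative orthant, in direction p, equals Σ_{e : x_e > 0} p_e·[∇F(x)]_e + 2·Σ_i ( Σ_{l : ‖x|_{A^i_l}‖ = 0} b^i_l·‖p|_{A^i_l}‖ − Σ_{e ∈ C^i, x_e = 0} p_e·c^i_e ), where [∇F(x)]_e = 2Σ_i ( x_e(1 + b^i_l/‖x|_{A^i_l}‖) if e ∈ A^i_l, (x_e − c^i_e) if e ∈ C^i ). -/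
open Filter Topology
open scoped Classical

/-- Euclidean norm of the restriction of `x` to the coordinate set `A`. -/
noncomputable def rnorm {m : ℕ} (x : Fin m → ℝ) (A : Finset (Fin m)) : ℝ :=
  Real.sqrt (∑ e ∈ A, (x e)^2)

section aux
variable {m : ℕ}

lemma rnorm_eq (x p : Fin m → ℝ) (α : ℝ) (A : Finset (Fin m)) :
    rnorm (x + α • p) A = Real.sqrt (∑ e ∈ A, (x e + α * p e)^2) := by
  simp [rnorm]

lemma hasDerivAt_inner (A : Finset (Fin m)) (u v : Fin m → ℝ) :
    HasDerivAt (fun α : ℝ => ∑ e ∈ A, (u e + α * v e)^2) (2 * ∑ e ∈ A, u e * v e) 0 := by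
  have h : ∀ e ∈ A, HasDerivAt (fun α : ℝ => (u e + α * v e)^2)
      ((2:ℕ) * (u e + 0 * v e)^1 * (1 * v e)) 0 := fun e _ =>
    (((hasDerivAt_id (0:ℝ)).mul_const (v e)).const_add (u e)).pow 2
  have h2 := HasDerivAt.fun_sum h
  refine h2.congr_deriv ?_
  rw [Finset.mul_sum]
  exact Finset.sum_congr rfl fun e _ => by push_cast; ring

lemma rnorm_zero_imp (x : Fin m → ℝ) (A : Finset (Fin m)) (h : rnorm x A = 0) :
    ∀ e ∈ A, x e = 0 := by
  intro e he
  have hs : ∑ e ∈ A, (x e)^2 = 0 := by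
    have h2 := Real.sqrt_eq_zero'.mp h
    have hnn : (0:ℝ) ≤ ∑ e ∈ A, (x e)^2 := Finset.sum_nonneg fun e _ => sq_nonneg _
    linarith
  have := (Finset.sum_eq_zero_iff_of_nonneg (fun e _ => sq_nonneg (x e))).mp hs e he
  exact pow_eq_zero_iff (by norm_num) |>.mp this

lemma tendsto_A (A : Finset (Fin m)) (b : ℝ) (x p : Fin m → ℝ) :
    Tendsto (fun α : ℝ => ((rnorm (x + α • p) A + b)^2 - (rnorm x A + b)^2) / α)
      (𝓝[>] (0:ℝ))
      (𝓝 (2 * (∑ e ∈ A, x e * p e * (1 + b / rnorm x A))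
        + (if rnorm x A = 0 then 2 * b * rnorm p A else 0))) := by
  by_cases hr : rnorm x A = 0
  · have hx0 := rnorm_zero_imp x A hr
    rw [if_pos hr]
    have hsum0 : ∑ e ∈ A, x e * p e * (1 + b / rnorm x A) = 0 :=
      Finset.sum_eq_zero fun e he => by rw [hx0 e he]; ring
    rw [hsum0]
    have hev : ∀ᶠ α in 𝓝[>] (0:ℝ),
        α * (rnorm p A)^2 + 2 * b * rnorm p A
        = ((rnorm (x + α • p) A + b)^2 - (rnorm x A + b)^2) / α := by
      filter_upwards [self_mem_nhdsWithin] with α hα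
      have hα0 : (0:ℝ) < α := hα
      have h1 : rnorm (x + α • p) A = α * rnorm p A := by
        rw [rnorm_eq]
        have hsq : ∑ e ∈ A, (x e + α * p e)^2 = α^2 * ∑ e ∈ A, (p e)^2 := by
          rw [Finset.mul_sum]
          exact Finset.sum_congr rfl fun e he => by rw [hx0 e he]; ring
        rw [hsq, Real.sqrt_mul (by positivity), Real.sqrt_sq hα0.le]
        rfl
      rw [h1, hr]
      field_simp
      ring
    refine Tendsto.congr' hev ?_
    have hcont : Tendsto (fun α : ℝ => α * (rnorm p A)^2 + 2*b*rnorm p A) (𝓝 0)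
        (𝓝 (0 * (rnorm p A)^2 + 2*b*rnorm p A)) := by
      exact (Continuous.tendsto (by continuity) 0)
    have h6 : Tendsto (fun α : ℝ => α * (rnorm p A)^2 + 2*b*rnorm p A) (𝓝[>] (0:ℝ))
        (𝓝 (0 * (rnorm p A)^2 + 2*b*rnorm p A)) := hcont.mono_left nhdsWithin_le_nhds
    simpa using h6
  · have hS : ∑ e ∈ A, (x e)^2 ≠ 0 := fun h => hr (by rw [rnorm, h, Real.sqrt_zero])
    have h1 := hasDerivAt_inner A x p
    have hf0 : (∑ e ∈ A, (x e + (0:ℝ) * p e)^2) = ∑ e ∈ A, (x e)^2 := by simp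
    have h2 : HasDerivAt (fun α : ℝ => Real.sqrt (∑ e ∈ A, (x e + α * p e)^2))
        ((2*∑ e ∈ A, x e * p e) / (2 * Real.sqrt (∑ e ∈ A, (x e + (0:ℝ)*p e)^2))) 0 :=
      h1.sqrt (by rw [hf0]; exact hS)
    have h3 := (h2.add_const b).pow 2
    have h4 := hasDerivAt_iff_tendsto_slope.mp h3
    have h5 : Tendsto (fun α : ℝ => ((rnorm (x + α • p) A + b)^2 - (rnorm x A + b)^2) / α)
        (𝓝[>] (0:ℝ)) (𝓝 ((2:ℕ) * (Real.sqrt (∑ e ∈ A, (x e + (0:ℝ)*p e)^2) + b)^1 *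
          ((2*∑ e ∈ A, x e * p e) / (2 * Real.sqrt (∑ e ∈ A, (x e + (0:ℝ)*p e)^2))))) := by
      refine (h4.mono_left (nhdsWithin_mono 0 ?_)).congr fun α => ?_
      · intro a ha
        exact ne_of_gt ha
      · rw [slope_def_field]
        rw [rnorm_eq, sub_zero]
        congr 2
        rw [rnorm]
        show (Real.sqrt (∑ e ∈ A, (x e + (0:ℝ)*p e)^2) + b)^2 = _
        rw [hf0]
    rw [if_neg hr]
    convert h5 using 2
    have hr' : Real.sqrt (∑ e ∈ A, (x e)^2) ≠ 0 := fun h => hr (by rw [rnorm]; exact h)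
    have hrn : rnorm x A = Real.sqrt (∑ e ∈ A, (x e)^2) := rfl
    rw [hf0, ← Finset.sum_mul, hrn]
    field_simp
    ring
  
end aux

lemma tendsto_C (Cs : Finset (Fin m)) (c : Fin m → ℝ) (x p : Fin m → ℝ) :
    Tendsto (fun α : ℝ => ((∑ e ∈ Cs, ((x + α • p) e - c e)^2) - ∑ e ∈ Cs, (x e - c e)^2) / α)
      (𝓝[>] (0:ℝ)) (𝓝 (2 * ∑ e ∈ Cs, p e * (x e - c e))) := by
  have h1 := hasDerivAt_inner Cs (fun e => x e - c e) p
  have h4 := hasDerivAt_iff_tendsto_slope.mp h1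
  have h5 : Tendsto (fun α : ℝ => ((∑ e ∈ Cs, ((x + α • p) e - c e)^2) - ∑ e ∈ Cs, (x e - c e)^2) / α)
      (𝓝[>] (0:ℝ)) (𝓝 (2 * ∑ e ∈ Cs, (x e - c e) * p e)) := by
    refine (h4.mono_left (nhdsWithin_mono 0 ?_)).congr fun α => ?_
    · intro a ha
      exact ne_of_gt ha
    · rw [slope_def_field, sub_zero]
      congr 1
      · congr 1
        · exact Finset.sum_congr rfl fun e _ => by simp; ring
        · exact Finset.sum_congr rfl fun e _ => by simp
  convert h5 using 3
  exact Finset.sum_congr rfl fun e _ => mul_comm _ _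

/-- Value of the one-sided directional derivative of the Fréchet-type function
`F(x) = Σᵢ Σₗ (‖x|_{Aᵢₗ}‖ + bᵢₗ)² + Σᵢ Σ_{e∈Cᵢ} (xₑ - cᵢₑ)²` at a point `x` of the
nonnegative orthant in a feasible direction `p`: it decomposes into the restricted
gradient part over positive coordinates, the local support-pair norm terms, and the
common-edge terms on zero coordinates. -/
theorem frechet_dirDeriv_value (m n : ℕ) (k : Fin n → ℕ)
    (A : (i : Fin n) → Fin (k i) → Finset (Fin m))
    (C : Fin n → Finset (Fin m))
    (b : (i : Fin n) → Fin (k i) → ℝ) (c : Fin n → Fin m → ℝ)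
    (hAdisj : ∀ i, ∀ l l' : Fin (k i), l ≠ l' → Disjoint (A i l) (A i l'))
    (hAC : ∀ i l, Disjoint (A i l) (C i))
    (hb : ∀ i l, 0 ≤ b i l) (hc : ∀ i e, 0 ≤ c i e)
    (x p : Fin m → ℝ) (hx : ∀ e, 0 ≤ x e) (hp : ∀ e, x e = 0 → 0 ≤ p e)
    (F : (Fin m → ℝ) → ℝ)
    (hF : F = fun y => ∑ i, ((∑ l, (rnorm y (A i l) + b i l)^2)
        + ∑ e ∈ C i, (y e - c i e)^2))
    (grad : Fin m → ℝ)
    (hgrad : grad = fun e => 2 * ∑ i,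
        ((∑ l, if e ∈ A i l then x e * (1 + b i l / rnorm x (A i l)) else 0)
          + (if e ∈ C i then x e - c i e else 0))) :
    Tendsto (fun α : ℝ => (F (x + α • p) - F x) / α) (𝓝[>] 0)
      (𝓝 ((∑ e ∈ Finset.univ.filter (fun e => 0 < x e), p e * grad e)
        + 2 * ∑ i,
          ((∑ l ∈ Finset.univ.filter (fun l => rnorm x (A i l) = 0),
              b i l * rnorm p (A i l))
            - ∑ e ∈ (C i).filter (fun e => x e = 0), p e * c i e))) := by
  subst hF hgrad
  have key : Tendsto (fun α : ℝ => ∑ i,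
      ((∑ l, ((rnorm (x + α • p) (A i l) + b i l)^2 - (rnorm x (A i l) + b i l)^2) / α)
        + ((∑ e ∈ C i, ((x + α • p) e - c i e)^2) - ∑ e ∈ C i, (x e - c i e)^2) / α))
      (𝓝[>] (0:ℝ))
      (𝓝 (∑ i, ((∑ l, (2 * (∑ e ∈ A i l, x e * p e * (1 + b i l / rnorm x (A i l)))
          + (if rnorm x (A i l) = 0 then 2 * b i l * rnorm p (A i l) else 0)))
        + 2 * ∑ e ∈ C i, p e * (x e - c i e)))) := by
    refine tendsto_finset_sum _ fun i _ => Tendsto.add ?_ ?_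
    · exact tendsto_finset_sum _ fun l _ => tendsto_A (A i l) (b i l) x p
    · exact tendsto_C (C i) (c i) x p
  have hfun : ∀ α : ℝ,
      (∑ i, ((∑ l, ((rnorm (x + α • p) (A i l) + b i l)^2 - (rnorm x (A i l) + b i l)^2) / α)
        + ((∑ e ∈ C i, ((x + α • p) e - c i e)^2) - ∑ e ∈ C i, (x e - c i e)^2) / α))
      = ((fun y => ∑ i, ((∑ l, (rnorm y (A i l) + b i l)^2)
        + ∑ e ∈ C i, (y e - c i e)^2)) (x + α • p)
        - (fun y => ∑ i, ((∑ l, (rnorm y (A i l) + b i l)^2)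
        + ∑ e ∈ C i, (y e - c i e)^2)) x) / α := by
    intro α
    simp only
    rw [← Finset.sum_sub_distrib, Finset.sum_div]
    refine Finset.sum_congr rfl fun i _ => ?_
    rw [add_sub_add_comm, add_div]
    congr 1
    rw [← Finset.sum_div, ← Finset.sum_sub_distrib]
  have hS : ((∑ e ∈ Finset.univ.filter (fun e => 0 < x e), p e *
        ((fun e => 2 * ∑ i,
        ((∑ l, if e ∈ A i l then x e * (1 + b i l / rnorm x (A i l)) else 0)
          + (if e ∈ C i then x e - c i e else 0))) e))
        + 2 * ∑ i,
          ((∑ l ∈ Finset.univ.filter (fun l => rnorm x (A i l) = 0),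
              b i l * rnorm p (A i l))
            - ∑ e ∈ (C i).filter (fun e => x e = 0), p e * c i e))
      = ∑ i, ((∑ l, (2 * (∑ e ∈ A i l, x e * p e * (1 + b i l / rnorm x (A i l)))
          + (if rnorm x (A i l) = 0 then 2 * b i l * rnorm p (A i l) else 0)))
        + 2 * ∑ e ∈ C i, p e * (x e - c i e)) := by
    simp only
    have hswap : ∑ e ∈ Finset.univ.filter (fun e => 0 < x e), p e *
        (2 * ∑ i, ((∑ l, if e ∈ A i l then x e * (1 + b i l / rnorm x (A i l)) else 0)
          + (if e ∈ C i then x e - c i e else 0)))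
        = ∑ i, ∑ e ∈ Finset.univ.filter (fun e => 0 < x e),
            (2 * (p e * ∑ l, if e ∈ A i l then x e * (1 + b i l / rnorm x (A i l)) else 0)
             + 2 * (p e * if e ∈ C i then x e - c i e else 0)) := by
      rw [← Finset.sum_comm]
      refine Finset.sum_congr rfl fun e _ => ?_
      rw [Finset.mul_sum, Finset.mul_sum]
      exact Finset.sum_congr rfl fun i _ => by ring
    rw [hswap, Finset.mul_sum, ← Finset.sum_add_distrib]
    refine Finset.sum_congr rfl fun i _ => ?_
    have ha : ∀ l : Fin (k i), ∑ e ∈ Finset.univ.filter (fun e => 0 < x e),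
        p e * (if e ∈ A i l then x e * (1 + b i l / rnorm x (A i l)) else 0)
        = ∑ e ∈ A i l, x e * p e * (1 + b i l / rnorm x (A i l)) := by
      intro l
      have hmid : ∑ e, (if e ∈ A i l then x e * p e * (1 + b i l / rnorm x (A i l)) else 0)
          = ∑ e ∈ A i l, x e * p e * (1 + b i l / rnorm x (A i l)) := by
        rw [Finset.sum_ite_mem, Finset.univ_inter]
      rw [← hmid, Finset.sum_filter]
      refine Finset.sum_congr rfl fun e _ => ?_
      by_cases h2 : e ∈ A i l
      · simp only [if_pos h2]
        by_cases h1 : 0 < x e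
        · rw [if_pos h1]; ring
        · rw [if_neg h1]
          have hxe : x e = 0 := le_antisymm (not_lt.mp h1) (hx e)
          rw [hxe]; ring
      · simp only [if_neg h2, mul_zero, ite_self]
    have hbC : ∑ e ∈ Finset.univ.filter (fun e => 0 < x e),
        p e * (if e ∈ C i then x e - c i e else 0)
        = ∑ e ∈ C i, p e * (x e - c i e) + ∑ e ∈ (C i).filter (fun e => x e = 0), p e * c i e := by
      have hmain : ∑ e ∈ Finset.univ.filter (fun e => 0 < x e),
          p e * (if e ∈ C i then x e - c i e else 0)
          = ∑ e ∈ (C i).filter (fun e => ¬ x e = 0), p e * (x e - c i e) := by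
        have hfilt : Finset.univ.filter (fun e => e ∈ C i ∧ ¬ x e = 0)
            = (C i).filter (fun e => ¬ x e = 0) := by
          ext e; simp [Finset.mem_filter]
        rw [← hfilt, Finset.sum_filter, Finset.sum_filter]
        refine Finset.sum_congr rfl fun e _ => ?_
        by_cases h2 : e ∈ C i
        · by_cases h1 : 0 < x e
          · rw [if_pos h1, if_pos h2, if_pos ⟨h2, h1.ne'⟩]
          · have hxe : x e = 0 := le_antisymm (not_lt.mp h1) (hx e)
            rw [if_neg h1, if_neg (by simp [hxe] : ¬(e ∈ C i ∧ ¬ x e = 0))]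
        · simp [h2]
      have hsplit := Finset.sum_filter_add_sum_filter_not (C i) (fun e => x e = 0)
        (fun e => p e * (x e - c i e))
      have h0 : ∑ e ∈ (C i).filter (fun e => x e = 0), p e * (x e - c i e)
          = - ∑ e ∈ (C i).filter (fun e => x e = 0), p e * c i e := by
        rw [← Finset.sum_neg_distrib]
        refine Finset.sum_congr rfl fun e he => ?_
        rw [(Finset.mem_filter.mp he).2]; ring
      rw [hmain]
      have := hsplit
      linarith [hsplit, h0]
    have hcB : ∑ l, (if rnorm x (A i l) = 0 then 2 * b i l * rnorm p (A i l) else 0)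
        = 2 * ∑ l ∈ Finset.univ.filter (fun l => rnorm x (A i l) = 0),
            b i l * rnorm p (A i l) := by
      rw [Finset.mul_sum, Finset.sum_filter]
      exact Finset.sum_congr rfl fun l _ => by split_ifs <;> ring
    have haa : ∑ e ∈ Finset.univ.filter (fun e => 0 < x e),
        (p e * ∑ l, if e ∈ A i l then x e * (1 + b i l / rnorm x (A i l)) else 0)
        = ∑ l, ∑ e ∈ A i l, x e * p e * (1 + b i l / rnorm x (A i l)) := by
      rw [Finset.sum_congr rfl (fun e _ => Finset.mul_sum _ _ _), Finset.sum_comm]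
      exact Finset.sum_congr rfl fun l _ => ha l
    rw [Finset.sum_add_distrib, ← Finset.mul_sum, ← Finset.mul_sum, haa, hbC]
    rw [Finset.sum_add_distrib, ← Finset.mul_sum, hcB]
    ring
  rw [hS]
  exact key.congr hfun
end

section
/- Compatibility of splits is symmetric and each maximal pairwise-compatible collection of splits of {0,…,r} contains at most r−2 splits. In particular, any tree in T_r has at most r−2 interior edges. -/
/-- A split of `{0,…,n-1}`: a bipartition with both blocks of size at least 2,
represented by the block containing the label 0. -/
def Split (n : ℕ) [NeZero n] : Type :=
  {A : Finset (Fin n) // (0 : Fin n) ∈ A ∧ 2 ≤ A.card ∧ 2 ≤ Aᶜ.card}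

/-- Two splits are compatible if one of the four pairwise intersections of their
blocks is empty. -/
def Split.Compat {n : ℕ} [NeZero n] (s t : Split n) : Prop :=
  s.1 ∩ t.1 = ∅ ∨ s.1 ∩ t.1ᶜ = ∅ ∨ s.1ᶜ ∩ t.1 = ∅ ∨ s.1ᶜ ∩ t.1ᶜ = ∅


open Finset

/-- A laminar family of subsets of `M`, all of size ≥ 2 and properly contained in `M`,
has at most `M.card - 2` members. -/
lemma laminar_bound {α : Type*} [DecidableEq α] (m : ℕ) :
    ∀ (M : Finset α) (L : Finset (Finset α)), M.card = m →
    (∀ B ∈ L, B ⊆ M) →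
    (∀ B ∈ L, 2 ≤ B.card ∧ B.card + 1 ≤ M.card) →
    (∀ B ∈ L, ∀ C ∈ L, B ⊆ C ∨ C ⊆ B ∨ B ∩ C = ∅) →
    L.card ≤ M.card - 2 := by
  induction m using Nat.strong_induction_on with
  | _ m ih =>
  intro M L hm hsub hcard hlam
  rcases L.eq_empty_or_nonempty with rfl | hne
  · simp
  obtain ⟨B, hBL, hBmin⟩ := L.exists_min_image Finset.card hne
  have hB2 : 2 ≤ B.card := (hcard B hBL).1
  have hBM1 : B.card + 1 ≤ M.card := (hcard B hBL).2
  have hBsubM : B ⊆ M := hsub B hBL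
  obtain ⟨b, hbB⟩ : B.Nonempty := Finset.card_pos.mp (by omega)
  have hbM : b ∈ M := hBsubM hbB
  -- every other member contains B or is disjoint from B
  have hrel : ∀ C ∈ L.erase B, B ⊆ C ∨ B ∩ C = ∅ := by
    intro C hC
    have hCL := Finset.mem_of_mem_erase hC
    have hCne := Finset.ne_of_mem_erase hC
    rcases hlam B hBL C hCL with h | h | h
    · exact Or.inl h
    · exact absurd (Finset.eq_of_subset_of_card_le h (hBmin C hCL)) hCne
    · exact Or.inr h
  set f : Finset α → Finset α := fun C => if B ⊆ C then insert b (C \ B) else C with hf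
  set M' : Finset α := insert b (M \ B) with hM'
  have hbnotMB : b ∉ M \ B := fun h => (Finset.mem_sdiff.mp h).2 hbB
  have hM'card : M'.card = M.card - B.card + 1 := by
    rw [hM', Finset.card_insert_of_notMem hbnotMB, Finset.card_sdiff_of_subset hBsubM]
  have hfpos : ∀ C, B ⊆ C → f C = insert b (C \ B) := by
    intro C hBC; simp only [hf, if_pos hBC]
  have hfneg : ∀ C, B ∩ C = ∅ → f C = C := by
    intro C hd
    have hnBC : ¬ B ⊆ C := by
      intro h
      have : b ∈ B ∩ C := Finset.mem_inter.mpr ⟨hbB, h hbB⟩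
      simp [hd] at this
    simp only [hf, if_neg hnBC]
  have hfcard : ∀ C, B ⊆ C → (f C).card = C.card - B.card + 1 := by
    intro C hBC
    have hbC : b ∉ C \ B := fun h => (Finset.mem_sdiff.mp h).2 hbB
    rw [hfpos C hBC, Finset.card_insert_of_notMem hbC, Finset.card_sdiff_of_subset hBC]
  have hCcard : ∀ C ∈ L.erase B, B ⊆ C → B.card + 1 ≤ C.card := by
    intro C hC hBC
    have hCne := Finset.ne_of_mem_erase hC
    exact Finset.card_lt_card
      (Finset.ssubset_iff_subset_ne.mpr ⟨hBC, fun h => hCne h.symm⟩)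
  have hbD : ∀ C, B ∩ C = ∅ → b ∉ C := by
    intro C hd h
    have : b ∈ B ∩ C := Finset.mem_inter.mpr ⟨hbB, h⟩
    simp [hd] at this
  have hsub' : ∀ C ∈ L.erase B, f C ⊆ M' := by
    intro C hC
    have hCL := Finset.mem_of_mem_erase hC
    rcases hrel C hC with hBC | hd
    · rw [hfpos C hBC]
      exact Finset.insert_subset_insert _
        (Finset.sdiff_subset_sdiff (hsub C hCL) (le_refl _))
    · rw [hfneg C hd]
      intro x hx
      refine Finset.mem_insert_of_mem (Finset.mem_sdiff.mpr ⟨hsub C hCL hx, fun hxB => ?_⟩)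
      have : x ∈ B ∩ C := Finset.mem_inter.mpr ⟨hxB, hx⟩
      simp [hd] at this
  have hcard' : ∀ C ∈ L.erase B, 2 ≤ (f C).card ∧ (f C).card + 1 ≤ M'.card := by
    intro C hC
    have hCL := Finset.mem_of_mem_erase hC
    have hC2 := (hcard C hCL).1
    have hCM := (hcard C hCL).2
    rcases hrel C hC with hBC | hd
    · have h1 := hfcard C hBC
      have h2 := hCcard C hC hBC
      omega
    · rw [hfneg C hd]
      refine ⟨hC2, ?_⟩
      have hCsub : C ⊆ M' := by
        have := hsub' C hC; rwa [hfneg C hd] at this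
      exact Finset.card_lt_card ((Finset.ssubset_iff_of_subset hCsub).mpr
        ⟨b, Finset.mem_insert_self _ _, hbD C hd⟩)
  -- mixed-case laminarity helper
  have hmix : ∀ C ∈ L.erase B, ∀ D ∈ L.erase B, B ⊆ C → B ∩ D = ∅ →
      f C ⊆ f D ∨ f D ⊆ f C ∨ f C ∩ f D = ∅ := by
    intro C hC D hD hBC hd
    have hCL := Finset.mem_of_mem_erase hC
    have hDL := Finset.mem_of_mem_erase hD
    rw [hfpos C hBC, hfneg D hd]
    rcases hlam C hCL D hDL with h | h | h
    · exfalso; exact hbD D hd (h (hBC hbB))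
    · refine Or.inr (Or.inl fun x hx => ?_)
      refine Finset.mem_insert_of_mem (Finset.mem_sdiff.mpr ⟨h hx, fun hxB => ?_⟩)
      have : x ∈ B ∩ D := Finset.mem_inter.mpr ⟨hxB, hx⟩
      simp [hd] at this
    · refine Or.inr (Or.inr (Finset.eq_empty_iff_forall_notMem.mpr fun x hx => ?_))
      obtain ⟨hx1, hx2⟩ := Finset.mem_inter.mp hx
      rcases Finset.mem_insert.mp hx1 with rfl | hx1
      · exact hbD D hd hx2
      · have : x ∈ C ∩ D := Finset.mem_inter.mpr ⟨(Finset.mem_sdiff.mp hx1).1, hx2⟩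
        simp [h] at this
  have hlam' : ∀ C ∈ L.erase B, ∀ D ∈ L.erase B,
      f C ⊆ f D ∨ f D ⊆ f C ∨ f C ∩ f D = ∅ := by
    intro C hC D hD
    have hCL := Finset.mem_of_mem_erase hC
    have hDL := Finset.mem_of_mem_erase hD
    rcases hrel C hC with hBC | hdC <;> rcases hrel D hD with hBD | hdD
    · rw [hfpos C hBC, hfpos D hBD]
      rcases hlam C hCL D hDL with h | h | h
      · exact Or.inl (Finset.insert_subset_insert _ (Finset.sdiff_subset_sdiff h (le_refl _)))
      · exact Or.inr (Or.inl (Finset.insert_subset_insert _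
          (Finset.sdiff_subset_sdiff h (le_refl _))))
      · exfalso
        have : b ∈ C ∩ D := Finset.mem_inter.mpr ⟨hBC hbB, hBD hbB⟩
        simp [h] at this
    · exact hmix C hC D hD hBC hdD
    · rcases hmix D hD C hC hBD hdC with h | h | h
      · exact Or.inr (Or.inl h)
      · exact Or.inl h
      · exact Or.inr (Or.inr (by rwa [Finset.inter_comm] at h))
    · rw [hfneg C hdC, hfneg D hdD]; exact hlam C hCL D hDL
  -- injectivity
  have hinj : Set.InjOn f ↑(L.erase B) := by
    intro C hC D hD hfCD
    rw [Finset.mem_coe] at hC hD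
    rcases hrel C hC with hBC | hdC <;> rcases hrel D hD with hBD | hdD
    · rw [hfpos C hBC, hfpos D hBD] at hfCD
      have hbC : b ∉ C \ B := fun h => (Finset.mem_sdiff.mp h).2 hbB
      have hbD' : b ∉ D \ B := fun h => (Finset.mem_sdiff.mp h).2 hbB
      have : C \ B = D \ B := by
        have := congrArg (fun s => Finset.erase s b) hfCD
        simpa [Finset.erase_insert hbC, Finset.erase_insert hbD'] using this
      calc C = C \ B ∪ B := (Finset.sdiff_union_of_subset hBC).symm
        _ = D \ B ∪ B := by rw [this]
        _ = D := Finset.sdiff_union_of_subset hBD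
    · exfalso
      rw [hfpos C hBC, hfneg D hdD] at hfCD
      exact hbD D hdD (hfCD ▸ Finset.mem_insert_self b _)
    · exfalso
      rw [hfneg C hdC, hfpos D hBD] at hfCD
      exact hbD C hdC (hfCD ▸ Finset.mem_insert_self b _)
    · rwa [hfneg C hdC, hfneg D hdD] at hfCD
  set L' : Finset (Finset α) := (L.erase B).image f with hL'
  have hL'card : L'.card = L.card - 1 := by
    rw [hL', Finset.card_image_of_injOn hinj, Finset.card_erase_of_mem hBL]
  have hM'lt : M'.card < m := by omega
  have hmain : L'.card ≤ M'.card - 2 := by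
    apply ih M'.card hM'lt M' L' rfl
    · intro X hX
      obtain ⟨C, hC, rfl⟩ := Finset.mem_image.mp hX
      exact hsub' C hC
    · intro X hX
      obtain ⟨C, hC, rfl⟩ := Finset.mem_image.mp hX
      exact hcard' C hC
    · intro X hX Y hY
      obtain ⟨C, hC, rfl⟩ := Finset.mem_image.mp hX
      obtain ⟨D, hD, rfl⟩ := Finset.mem_image.mp hY
      exact hlam' C hC D hD
  have hLpos : 1 ≤ L.card := Finset.card_pos.mpr hne
  omega

/-- Compatibility of splits is symmetric, and any pairwise-compatible collection of
splits of `{0,…,r}` has at most `r-2` elements: a tree in `T_r` has at most `r-2`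
interior edges. -/
theorem compat_symm_and_max_interior_edges (r : ℕ) :
    (∀ s t : Split (r+1), Split.Compat s t → Split.Compat t s) ∧
    (∀ S : Finset (Split (r+1)), (∀ a ∈ S, ∀ b ∈ S, Split.Compat a b) →
      S.card ≤ r - 2) := by
  constructor
  · intro s t h
    rcases h with h | h | h | h
    · exact Or.inl (by rwa [Finset.inter_comm] at h)
    · exact Or.inr (Or.inr (Or.inl (by rwa [Finset.inter_comm] at h)))
    · exact Or.inr (Or.inl (by rwa [Finset.inter_comm] at h))
    · exact Or.inr (Or.inr (Or.inr (by rwa [Finset.inter_comm] at h)))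
  · intro S hS
    classical
    set M : Finset (Fin (r+1)) := Finset.univ.erase 0 with hM
    have hMcard : M.card = r := by
      rw [hM, Finset.card_erase_of_mem (Finset.mem_univ _), Finset.card_univ,
        Fintype.card_fin]
      omega
    set L : Finset (Finset (Fin (r+1))) := S.image (fun s => s.1ᶜ) with hL
    have hinj : Set.InjOn (fun s : Split (r+1) => s.1ᶜ) ↑S := by
      intro a _ b _ hab
      exact Subtype.ext (compl_inj_iff.mp hab)
    have hLcard : L.card = S.card := Finset.card_image_of_injOn hinj
    have hmain : L.card ≤ M.card - 2 := by
      apply laminar_bound M.card M L rfl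
      · intro X hX
        obtain ⟨a, haS, rfl⟩ := Finset.mem_image.mp hX
        intro x hx
        refine Finset.mem_erase.mpr ⟨fun h => ?_, Finset.mem_univ _⟩
        exact (Finset.mem_compl.mp hx) (h ▸ a.2.1)
      · intro X hX
        obtain ⟨a, haS, rfl⟩ := Finset.mem_image.mp hX
        refine ⟨a.2.2.2, ?_⟩
        have h1 : a.1ᶜ.card = (r+1) - a.1.card := by
          rw [Finset.card_compl, Fintype.card_fin]
        have h2 := a.2.2.1
        have h3 : a.1.card ≤ r + 1 := by
          simpa using Finset.card_le_card (Finset.subset_univ a.1)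
        omega
      · intro X hX Y hY
        obtain ⟨a, haS, rfl⟩ := Finset.mem_image.mp hX
        obtain ⟨b, hbS, rfl⟩ := Finset.mem_image.mp hY
        rcases hS a haS b hbS with h | h | h | h
        · exfalso
          have : (0 : Fin (r+1)) ∈ a.1 ∩ b.1 := Finset.mem_inter.mpr ⟨a.2.1, b.2.1⟩
          simp [h] at this
        · refine Or.inr (Or.inl fun x hx => Finset.mem_compl.mpr fun hxa => ?_)
          have : x ∈ a.1 ∩ b.1ᶜ := Finset.mem_inter.mpr ⟨hxa, hx⟩
          simp [h] at this
        · refine Or.inl fun x hx => Finset.mem_compl.mpr fun hxb => ?_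
          have : x ∈ a.1ᶜ ∩ b.1 := Finset.mem_inter.mpr ⟨hx, hxb⟩
          simp [h] at this
        · exact Or.inr (Or.inr h)
    omega
end
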